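/- For λ > 0 and a partition Δ of [a,b], the 'hat' exponential B-splines N_i ∈ 𝕊(D²−λ², Δ) defined by N_i(t_j) = δ_{ij} and N_i supported on [t_{i−1}, t_{i+1}] exist, are unique, are nonnegative on [a,b], and satisfy 0 ≤ N_i(x) ≤ 1 for all x ∈ [a,b]. -/
import Mathlib

lemma sinh_combo (l c x d : ℝ) :
    Real.sinh (l * (x - c)) / d =
      (Real.exp (-(l * c)) / (2 * d)) * Real.exp (l * x) +
      (-Real.exp (l * c) / (2 * d)) * Real.exp (-l * x) := by
  rw [Real.sinh_eq]
  have h1 : Real.exp (l * (x - c)) = Real.exp (l * x) * Real.exp (-(l * c)) := by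
    rw [← Real.exp_add]; ring_nf
  have h2 : Real.exp (-(l * (x - c))) = Real.exp (-l * x) * Real.exp (l * c) := by
    rw [← Real.exp_add]; ring_nf
  rw [h1, h2]; ring

lemma sinh_combo' (l c x d : ℝ) :
    Real.sinh (l * (c - x)) / d =
      (-Real.exp (-(l * c)) / (2 * d)) * Real.exp (l * x) +
      (Real.exp (l * c) / (2 * d)) * Real.exp (-l * x) := by
  have h : l * (c - x) = -(l * (x - c)) := by ring
  rw [h, Real.sinh_neg, neg_div, sinh_combo]; ring

lemma expCombo_unique (l p q : ℝ) (hl : l ≠ 0) (hpq : p ≠ q) (A B A' B' : ℝ)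
    (h1 : A * Real.exp (l * p) + B * Real.exp (-l * p)
        = A' * Real.exp (l * p) + B' * Real.exp (-l * p))
    (h2 : A * Real.exp (l * q) + B * Real.exp (-l * q)
        = A' * Real.exp (l * q) + B' * Real.exp (-l * q)) :
    ∀ x, A * Real.exp (l * x) + B * Real.exp (-l * x)
        = A' * Real.exp (l * x) + B' * Real.exp (-l * x) := by
  have hG1 : Real.exp (l * p) * Real.exp (-l * p) = 1 := by
    rw [← Real.exp_add, show l * p + -l * p = 0 by ring, Real.exp_zero]
  have hG2 : Real.exp (l * q) * Real.exp (-l * q) = 1 := by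
    rw [← Real.exp_add, show l * q + -l * q = 0 by ring, Real.exp_zero]
  have d1 : (A - A') * (Real.exp (l * p) * Real.exp (l * p)) = B' - B := by
    linear_combination Real.exp (l * p) * h1 + (B' - B) * hG1
  have d2 : (A - A') * (Real.exp (l * q) * Real.exp (l * q)) = B' - B := by
    linear_combination Real.exp (l * q) * h2 + (B' - B) * hG2
  have hEF : Real.exp (l * p) ≠ Real.exp (l * q) := by
    intro h
    exact hpq (mul_left_cancel₀ hl (Real.exp_injective h))
  have hA : A = A' := by
    have h3 : (A - A') * (Real.exp (l * p) * Real.exp (l * p)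
        - Real.exp (l * q) * Real.exp (l * q)) = 0 := by linear_combination d1 - d2
    rcases mul_eq_zero.1 h3 with h | h
    · linarith
    · exfalso
      have h4 : Real.exp (l * p) * Real.exp (l * p)
          = Real.exp (l * q) * Real.exp (l * q) := by linarith
      rcases mul_self_eq_mul_self_iff.1 h4 with h' | h'
      · exact hEF h'
      · nlinarith [Real.exp_pos (l * p), Real.exp_pos (l * q)]
  have hB : B = B' := by
    have h5 : (B - B') * Real.exp (-l * p) = 0 := by
      rw [hA] at h1; linear_combination h1
    rcases mul_eq_zero.1 h5 with h | h
    · linarith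
    · exact absurd h (Real.exp_ne_zero _)
  intro x; rw [hA, hB]

lemma exists_sub (t : ℕ → ℝ) : ∀ n, 1 ≤ n → ∀ x : ℝ, t 0 ≤ x → x ≤ t n →
    ∃ j, j < n ∧ t j ≤ x ∧ x ≤ t (j + 1) := by
  intro n
  induction n with
  | zero => omega
  | succ m ih =>
    intro _ x h1 h2
    by_cases hm : m = 0
    · subst hm; exact ⟨0, by omega, h1, h2⟩
    · by_cases hx : x ≤ t m
      · obtain ⟨j, hj, hle, hge⟩ := ih (by omega) x h1 hx
        exact ⟨j, by omega, hle, hge⟩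
      · exact ⟨m, by omega, (not_le.1 hx).le, h2⟩
/-- `s` is an exponential `L`-spline for `L = D² − λ²` on the partition
`t 0 < t 1 < ⋯ < t n`: continuous on `[t 0, t n]` and on each subinterval a linear
combination of `exp (λ x)` and `exp (−λ x)`. -/
def IsExpSpline (l : ℝ) (n : ℕ) (t : ℕ → ℝ) (s : ℝ → ℝ) : Prop :=
  ContinuousOn s (Set.Icc (t 0) (t n)) ∧
  ∀ i < n, ∃ A B : ℝ, ∀ x ∈ Set.Icc (t i) (t (i + 1)),
    s x = A * Real.exp (l * x) + B * Real.exp (-l * x)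

/-- `N` is the `i`-th "hat" exponential B-spline: the spline with `N (t j) = δ_{i j}`
supported (within `[a, b] = [t 0, t n]`) on `[t (i−1), t (i+1)] ∩ [a, b]`. -/
def IsExpHat (l : ℝ) (n : ℕ) (t : ℕ → ℝ) (i : ℕ) (N : ℝ → ℝ) : Prop :=
  IsExpSpline l n t N ∧
  (∀ j ≤ n, N (t j) = if i = j then 1 else 0) ∧
  (∀ x ∈ Set.Icc (t 0) (t n), x ∉ Set.Icc (t (i - 1)) (t (min (i + 1) n)) → N x = 0)

/-- The hat exponential B-splines exist, are unique (as functions on `[a, b]`),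
and satisfy `0 ≤ N_i(x) ≤ 1` on `[a, b]`. -/
theorem expHat_exists_unique_nonneg (a b l : ℝ) (hab : a < b) (hl : 0 < l)
    (n : ℕ) (hn : 1 ≤ n) (t : ℕ → ℝ) (hmono : ∀ i < n, t i < t (i + 1))
    (h0 : t 0 = a) (hb : t n = b) :
    ∀ i ≤ n, ∃ N : ℝ → ℝ, IsExpHat l n t i N ∧
      (∀ x ∈ Set.Icc a b, 0 ≤ N x ∧ N x ≤ 1) ∧
      (∀ N' : ℝ → ℝ, IsExpHat l n t i N' → ∀ x ∈ Set.Icc a b, N' x = N x) := by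
  subst h0; subst hb
  have hl0 : l ≠ 0 := ne_of_gt hl
  have tlt : ∀ j k, j < k → k ≤ n → t j < t k := by
    intro j k hjk hkn
    induction k with
    | zero => omega
    | succ m ih =>
      rcases Nat.lt_or_ge j m with h | h
      · exact (ih (by omega) (by omega)).trans (hmono m (by omega))
      · have hjm : j = m := by omega
        subst hjm; exact hmono j (by omega)
  have tle : ∀ j k, j ≤ k → k ≤ n → t j ≤ t k := by
    intro j k hjk hkn
    rcases eq_or_lt_of_le hjk with h | h
    · rw [h]
    · exact (tlt j k h hkn).le
  intro i hi
  set f : ℝ → ℝ := fun x =>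
    if i = 0 then 1 else
      Real.sinh (l * (x - t (i - 1))) / Real.sinh (l * (t i - t (i - 1))) with hfdef
  set g : ℝ → ℝ := fun x =>
    if i = n then 1 else
      Real.sinh (l * (t (i + 1) - x)) / Real.sinh (l * (t (i + 1) - t i)) with hgdef
  set N : ℝ → ℝ := fun x => max 0 (min (f x) (g x)) with hNdef
  have hti : i ≠ 0 → t (i - 1) < t i := by
    intro h
    have := hmono (i - 1) (by omega)
    rwa [show i - 1 + 1 = i by omega] at this
  have hti' : i ≠ n → t i < t (i + 1) := fun h => hmono i (by omega)
  have hd1 : i ≠ 0 → 0 < Real.sinh (l * (t i - t (i - 1))) := by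
    intro h
    exact Real.sinh_pos_iff.2 (mul_pos hl (sub_pos.2 (hti h)))
  have hd2 : i ≠ n → 0 < Real.sinh (l * (t (i + 1) - t i)) := by
    intro h
    exact Real.sinh_pos_iff.2 (mul_pos hl (sub_pos.2 (hti' h)))
  have hfnp : ∀ x, i ≠ 0 → x ≤ t (i - 1) → f x ≤ 0 := by
    intro x h hx
    simp only [hfdef, if_neg h]
    apply div_nonpos_of_nonpos_of_nonneg _ (hd1 h).le
    exact Real.sinh_nonpos_iff.2 (by nlinarith)
  have hfnn : ∀ x, i ≠ 0 → t (i - 1) ≤ x → 0 ≤ f x := by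
    intro x h hx
    simp only [hfdef, if_neg h]
    apply div_nonneg _ (hd1 h).le
    exact Real.sinh_nonneg_iff.2 (by nlinarith)
  have hfle1 : ∀ x, i ≠ 0 → x ≤ t i → f x ≤ 1 := by
    intro x h hx
    simp only [hfdef, if_neg h]
    rw [div_le_one (hd1 h)]
    exact Real.sinh_le_sinh.2 (by nlinarith)
  have hfge1 : ∀ x, i ≠ 0 → t i ≤ x → 1 ≤ f x := by
    intro x h hx
    simp only [hfdef, if_neg h]
    rw [le_div_iff₀ (hd1 h), one_mul]
    exact Real.sinh_le_sinh.2 (by nlinarith)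
  have hgnp : ∀ x, i ≠ n → t (i + 1) ≤ x → g x ≤ 0 := by
    intro x h hx
    simp only [hgdef, if_neg h]
    apply div_nonpos_of_nonpos_of_nonneg _ (hd2 h).le
    exact Real.sinh_nonpos_iff.2 (by nlinarith)
  have hgnn : ∀ x, i ≠ n → x ≤ t (i + 1) → 0 ≤ g x := by
    intro x h hx
    simp only [hgdef, if_neg h]
    apply div_nonneg _ (hd2 h).le
    exact Real.sinh_nonneg_iff.2 (by nlinarith)
  have hgle1 : ∀ x, i ≠ n → t i ≤ x → g x ≤ 1 := by
    intro x h hx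
    simp only [hgdef, if_neg h]
    rw [div_le_one (hd2 h)]
    exact Real.sinh_le_sinh.2 (by nlinarith)
  have hgge1 : ∀ x, i ≠ n → x ≤ t i → 1 ≤ g x := by
    intro x h hx
    simp only [hgdef, if_neg h]
    rw [le_div_iff₀ (hd2 h), one_mul]
    exact Real.sinh_le_sinh.2 (by nlinarith)
  have hf1 : i = 0 → ∀ x : ℝ, f x = 1 := by intro h x; simp [hfdef, if_pos h]
  have hg1 : i = n → ∀ x : ℝ, g x = 1 := by intro h x; simp [hgdef, if_pos h]
  have hNf : ∀ x, i ≠ 0 → t (i - 1) ≤ x → x ≤ t i → N x = f x := by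
    intro x h h1 h2
    have hfg : f x ≤ g x := by
      by_cases hn' : i = n
      · rw [hg1 hn' x]; exact hfle1 x h h2
      · exact (hfle1 x h h2).trans (hgge1 x hn' h2)
    simp only [hNdef]
    rw [min_eq_left hfg, max_eq_right (hfnn x h h1)]
  have hNg : ∀ x, i ≠ n → t i ≤ x → x ≤ t (i + 1) → N x = g x := by
    intro x h h1 h2
    have hfg : g x ≤ f x := by
      by_cases h0' : i = 0
      · rw [hf1 h0' x]; exact hgle1 x h h1
      · exact (hgle1 x h h1).trans (hfge1 x h0' h1)
    simp only [hNdef]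
    rw [min_eq_right hfg, max_eq_right (hgnn x h h2)]
  have hN0l : ∀ x, i ≠ 0 → x ≤ t (i - 1) → N x = 0 := by
    intro x h hx
    simp only [hNdef]
    exact max_eq_left ((min_le_left _ _).trans (hfnp x h hx))
  have hN0r : ∀ x, i ≠ n → t (i + 1) ≤ x → N x = 0 := by
    intro x h hx
    simp only [hNdef]
    exact max_eq_left ((min_le_right _ _).trans (hgnp x h hx))
  have hfi : f (t i) = 1 := by
    by_cases h : i = 0
    · exact hf1 h _
    · simp only [hfdef, if_neg h]
      exact div_self (ne_of_gt (hd1 h))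
  have hgi : g (t i) = 1 := by
    by_cases h : i = n
    · exact hg1 h _
    · simp only [hgdef, if_neg h]
      exact div_self (ne_of_gt (hd2 h))
  have hNi : N (t i) = 1 := by
    simp only [hNdef, hfi, hgi, min_self]
    norm_num
  have hfc : Continuous f := by
    rw [hfdef]
    by_cases h : i = 0
    · simp only [if_pos h]; exact continuous_const
    · simp only [if_neg h]
      exact (Real.continuous_sinh.comp
        (continuous_const.mul (continuous_id.sub continuous_const))).div_const _
  have hgc : Continuous g := by
    rw [hgdef]
    by_cases h : i = n
    · simp only [if_pos h]; exact continuous_const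
    · simp only [if_neg h]
      exact (Real.continuous_sinh.comp
        (continuous_const.mul (continuous_const.sub continuous_id))).div_const _
  have hNc : Continuous N := by
    rw [hNdef]
    exact continuous_const.max (hfc.min hgc)
  have hhat : IsExpHat l n t i N := by
    refine ⟨⟨hNc.continuousOn, ?_⟩, ?_, ?_⟩
    · intro j hj
      by_cases hcase1 : j + 1 < i
      · refine ⟨0, 0, fun x hx => ?_⟩
        have hxle : x ≤ t (i - 1) := hx.2.trans (tle (j + 1) (i - 1) (by omega) (by omega))
        rw [hN0l x (by omega) hxle]; ring
      by_cases hcase2 : i < j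
      · refine ⟨0, 0, fun x hx => ?_⟩
        have hxge : t (i + 1) ≤ x := (tle (i + 1) j (by omega) (by omega)).trans hx.1
        rw [hN0r x (by omega) hxge]; ring
      by_cases hcase3 : j = i
      · have hin : i ≠ n := by omega
        refine ⟨-Real.exp (-(l * t (i + 1))) / (2 * Real.sinh (l * (t (i + 1) - t i))),
                Real.exp (l * t (i + 1)) / (2 * Real.sinh (l * (t (i + 1) - t i))),
                fun x hx => ?_⟩
        rw [hcase3] at hx
        rw [hNg x hin hx.1 hx.2]
        simp only [hgdef, if_neg hin]
        exact sinh_combo' l (t (i + 1)) x _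
      · have hji : j + 1 = i := by omega
        have hi0 : i ≠ 0 := by omega
        have e1 : t (i - 1) = t j := by rw [show i - 1 = j by omega]
        have e2 : t i = t (j + 1) := by rw [← hji]
        refine ⟨Real.exp (-(l * t j)) / (2 * Real.sinh (l * (t (j + 1) - t j))),
                -Real.exp (l * t j) / (2 * Real.sinh (l * (t (j + 1) - t j))),
                fun x hx => ?_⟩
        rw [hNf x hi0 (by rw [e1]; exact hx.1) (by rw [e2]; exact hx.2)]
        simp only [hfdef, if_neg hi0, e1, e2]
        exact sinh_combo l (t j) x _
    · intro j hjn
      by_cases hij : i = j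
      · rw [if_pos hij, ← hij]; exact hNi
      · rw [if_neg hij]
        rcases Nat.lt_or_ge j i with h | h
        · exact hN0l (t j) (by omega) (tle j (i - 1) (by omega) (by omega))
        · have hlt : i < j := by omega
          exact hN0r (t j) (by omega) (tle (i + 1) j (by omega) hjn)
    · intro x hx hnot
      simp only [Set.mem_Icc, not_and, not_le] at hnot
      by_cases hcase : t (i - 1) ≤ x
      · have h2 := hnot hcase
        by_cases h : i = n
        · exfalso
          rw [show min (i + 1) n = n by omega] at h2
          exact absurd hx.2 (not_le.2 h2)
        · rw [show min (i + 1) n = i + 1 by omega] at h2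
          exact hN0r x h h2.le
      · push_neg at hcase
        have h : i ≠ 0 := by
          intro h0'
          rw [h0'] at hcase
          exact absurd hx.1 (not_le.2 (by simpa using hcase))
        exact hN0l x h hcase.le
  refine ⟨N, hhat, ?_, ?_⟩
  · intro x hx
    constructor
    · simp only [hNdef]; exact le_max_left _ _
    · simp only [hNdef]
      apply max_le (by norm_num)
      by_cases h0' : i = 0
      · exact (min_le_left _ _).trans (le_of_eq (hf1 h0' x))
      by_cases hn' : i = n
      · exact (min_le_right _ _).trans (le_of_eq (hg1 hn' x))
      by_cases hxi : x ≤ t i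
      · exact (min_le_left _ _).trans (hfle1 x h0' hxi)
      · exact (min_le_right _ _).trans (hgle1 x hn' (not_le.1 hxi).le)
  · intro N' hN' x hx
    obtain ⟨j, hj, hx1, hx2⟩ := exists_sub t n hn x hx.1 hx.2
    obtain ⟨A, B, hAB⟩ := hhat.1.2 j hj
    obtain ⟨A', B', hAB'⟩ := hN'.1.2 j hj
    have hj1 : t j ∈ Set.Icc (t j) (t (j + 1)) := ⟨le_rfl, (hmono j hj).le⟩
    have hj2 : t (j + 1) ∈ Set.Icc (t j) (t (j + 1)) := ⟨(hmono j hj).le, le_rfl⟩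
    have e1 : A' * Real.exp (l * t j) + B' * Real.exp (-l * t j)
            = A * Real.exp (l * t j) + B * Real.exp (-l * t j) := by
      rw [← hAB (t j) hj1, ← hAB' (t j) hj1, hhat.2.1 j (by omega), hN'.2.1 j (by omega)]
    have e2 : A' * Real.exp (l * t (j + 1)) + B' * Real.exp (-l * t (j + 1))
            = A * Real.exp (l * t (j + 1)) + B * Real.exp (-l * t (j + 1)) := by
      rw [← hAB (t (j + 1)) hj2, ← hAB' (t (j + 1)) hj2,
        hhat.2.1 (j + 1) (by omega), hN'.2.1 (j + 1) (by omega)]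
    rw [hAB' x ⟨hx1, hx2⟩, hAB x ⟨hx1, hx2⟩]
    exact expCombo_unique l (t j) (t (j + 1)) hl0 (ne_of_lt (hmono j hj)) A' B' A B e1 e2 x
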